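/- Every Wahl chain [e_1,...,e_r] different from [4] and [2,5] admits a marking making it a del Pezzo Wahl chain of type (I) and degree 4, with central mark e_1 or e_r. -/

import Mathlib

/-- The value of a Hirzebruch–Jung continued fraction `[e₁,…,e_r]`,
computed as `e₁ - 1/[e₂,…,e_r]` with `[e_r] = e_r`. -/
def hjVal : List ℤ → ℚ
  | [] => 0
  | [x] => (x : ℚ)
  | x :: y :: xs => (x : ℚ) - (hjVal (y :: xs))⁻¹

/-- `IsHJ m q L` : `L` is the HJ continued fraction expansion of `m/q`
(all entries at least 2 and value `m/q`). -/
def IsHJ (m q : ℤ) (L : List ℤ) : Prop :=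
  (∀ e ∈ L, 2 ≤ e) ∧ hjVal L = (m : ℚ) / (q : ℚ)

/-- `IsWahlChain n a L` : `L` is the Wahl chain of `n²/(na-1)` for coprime `0 < a < n`. -/
def IsWahlChain (n a : ℤ) (L : List ℤ) : Prop :=
  0 < a ∧ a < n ∧ Int.gcd n a = 1 ∧ IsHJ (n ^ 2) (n * a - 1) L

/-- One blow-down move on a chain: `[…,u,1,v,…] ↦ […,u-1,v-1,…]`,
including the boundary cases `[1,v,…] ↦ [v-1,…]` and `[…,u,1] ↦ […,u-1]`. -/
inductive BDStep : List ℤ → List ℤ → Prop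
  | mid (l r : List ℤ) (u v : ℤ) :
      BDStep (l ++ u :: 1 :: v :: r) (l ++ (u - 1) :: (v - 1) :: r)
  | left (r : List ℤ) (v : ℤ) : BDStep (1 :: v :: r) ((v - 1) :: r)
  | right (l : List ℤ) (u : ℤ) : BDStep (l ++ [u, 1]) (l ++ [u - 1])

/-- A zero continued fraction: a chain that blows down to `[1,1]`. -/
def IsZCF (L : List ℤ) : Prop :=
  Relation.ReflTransGen BDStep L [1, 1]

/-- `AdmitsZCF L lam` : one can decrease some entries of `L` by positive integers
with total sum `lam + 1` so that the result is a zero continued fraction. -/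
def AdmitsZCF (L : List ℤ) (lam : ℤ) : Prop :=
  ∃ K : List ℤ, K.length = L.length ∧ (∀ i : ℕ, K.getD i 0 ≤ L.getD i 0) ∧
    L.sum - K.sum = lam + 1 ∧ IsZCF K


section Stmt8Proof

namespace Aux8

lemma hjVal_cons (x : ℤ) (t : List ℤ) : hjVal (x :: t) = (x : ℚ) - (hjVal t)⁻¹ := by
  cases t with
  | nil => simp [hjVal]
  | cons y ys => rfl

/-- 2x2 integer matrix as a flat structure. -/
@[ext] structure M2 where
  a : ℤ
  b : ℤ
  c : ℤ
  d : ℤ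

def M2.mul (X Y : M2) : M2 :=
  ⟨X.a*Y.a + X.b*Y.c, X.a*Y.b + X.b*Y.d, X.c*Y.a + X.d*Y.c, X.c*Y.b + X.d*Y.d⟩

def cm : List ℤ → M2
  | [] => ⟨1, 0, 0, 1⟩
  | x :: t => ⟨x * (cm t).a - (cm t).c, x * (cm t).b - (cm t).d, (cm t).a, (cm t).b⟩

lemma cm_nil : cm [] = ⟨1,0,0,1⟩ := rfl

lemma cm_cons (x : ℤ) (t : List ℤ) :
    cm (x :: t) = ⟨x * (cm t).a - (cm t).c, x * (cm t).b - (cm t).d, (cm t).a, (cm t).b⟩ := rfl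

lemma cm_append (L M : List ℤ) : cm (L ++ M) = (cm L).mul (cm M) := by
  induction L with
  | nil => simp [cm_nil, M2.mul]
  | cons x t ih =>
      simp only [List.cons_append, cm_cons, ih, M2.mul]
      ext <;> ring

lemma cm_spec : ∀ L : List ℤ, (∀ e ∈ L, 2 ≤ e) →
    0 ≤ (cm L).c ∧ (cm L).c < (cm L).a ∧ hjVal L = ((cm L).a : ℚ) / ((cm L).c : ℚ) := by
  intro L
  induction L with
  | nil => intro _; refine ⟨le_refl 0, by norm_num [cm_nil], by simp [hjVal, cm_nil]⟩
  | cons x t ih =>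
      intro hent
      have hx : 2 ≤ x := hent x (by simp)
      have ih' := ih (fun e he => hent e (by simp [he]))
      obtain ⟨h0, h1, h2⟩ := ih'
      set p := (cm t).a with hp
      set r := (cm t).c with hr
      have hpa : (cm (x :: t)).a = x * p - r := rfl
      have hpc : (cm (x :: t)).c = p := rfl
      have hppos : 0 < p := lt_of_le_of_lt h0 h1
      constructor
      · rw [hpc]; exact le_of_lt hppos
      constructor
      · rw [hpa, hpc]; nlinarith
      · rw [hpa, hpc, hjVal_cons, h2]
        rcases eq_or_lt_of_le h0 with h0' | h0'
        · rw [← h0']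
          push_cast
          rw [div_zero, inv_zero]
          field_simp
          ring
        · have hpq : (p:ℚ) ≠ 0 := by exact_mod_cast hppos.ne'
          have hrq : (r:ℚ) ≠ 0 := by exact_mod_cast h0'.ne'
          rw [inv_div]
          push_cast
          field_simp
          try ring

lemma hjVal_gt_one : ∀ L : List ℤ, L ≠ [] → (∀ e ∈ L, 2 ≤ e) → 1 < hjVal L := by
  intro L
  induction L with
  | nil => intro h; exact absurd rfl h
  | cons x t ih =>
      intro _ hent
      have hx : 2 ≤ x := hent x (by simp)
      rw [hjVal_cons]
      cases t with
      | nil =>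
          have h0 : hjVal ([] : List ℤ) = 0 := rfl
          rw [h0, inv_zero, sub_zero]
          exact_mod_cast by linarith
      | cons y ys =>
          have ht : 1 < hjVal (y :: ys) := ih (by simp) (fun e he => hent e (by simp [he]))
          have htpos : 0 < hjVal (y :: ys) := by linarith
          have hinvpos : 0 < (hjVal (y :: ys))⁻¹ := inv_pos.mpr htpos
          have hinvlt : (hjVal (y :: ys))⁻¹ < 1 := by
            have h1 : (hjVal (y :: ys))⁻¹ * hjVal (y :: ys) = 1 := inv_mul_cancel₀ htpos.ne'
            nlinarith
          have : (2:ℚ) ≤ (x:ℚ) := by exact_mod_cast hx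
          linarith

lemma hjVal_unique : ∀ L M : List ℤ, (∀ e ∈ L, 2 ≤ e) → (∀ e ∈ M, 2 ≤ e) →
    hjVal L = hjVal M → L = M := by
  intro L
  induction L with
  | nil =>
      intro M _ hM hval
      cases M with
      | nil => rfl
      | cons y ys =>
          exfalso
          have := hjVal_gt_one (y :: ys) (by simp) hM
          rw [← hval] at this; simp [hjVal] at this; exact absurd this (by norm_num)
  | cons x t ih =>
      intro M hL hM hval
      cases M with
      | nil =>
          exfalso
          have := hjVal_gt_one (x :: t) (by simp) hL
          rw [hval] at this; simp [hjVal] at this; exact absurd this (by norm_num)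
      | cons y ys =>
          have hLt : ∀ e ∈ t, 2 ≤ e := fun e he => hL e (by simp [he])
          have hMy : ∀ e ∈ ys, 2 ≤ e := fun e he => hM e (by simp [he])
          have hinv : ∀ (u : List ℤ), (∀ e ∈ u, 2 ≤ e) →
              0 ≤ (hjVal u)⁻¹ ∧ (hjVal u)⁻¹ < 1 := by
            intro u hu
            cases u with
            | nil => simp [hjVal]
            | cons z zs =>
                have h1 : 1 < hjVal (z :: zs) := hjVal_gt_one _ (by simp) hu
                have hpos : 0 < hjVal (z :: zs) := by linarith
                constructor
                · positivity
                · have h2 : (hjVal (z::zs))⁻¹ * hjVal (z::zs) = 1 := inv_mul_cancel₀ hpos.ne'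
                  nlinarith [inv_pos.mpr hpos]
          obtain ⟨ht0, ht1⟩ := hinv t hLt
          obtain ⟨hy0, hy1⟩ := hinv ys hMy
          rw [hjVal_cons, hjVal_cons] at hval
          have hxy : x = y := by
            have h1 : ((x:ℚ) - y) < 1 := by linarith
            have h2 : (-1 : ℚ) < (x:ℚ) - y := by linarith
            have h1' : (x - y : ℤ) < 1 := by exact_mod_cast h1
            have h2' : (-1 : ℤ) < x - y := by exact_mod_cast h2
            omega
          subst hxy
          have hinveq : (hjVal t)⁻¹ = (hjVal ys)⁻¹ := by linarith
          have htys : hjVal t = hjVal ys := inv_injective hinveq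
          rw [ih ys hLt hMy htys]

end Aux8

namespace Aux8

def incFirst : List ℤ → List ℤ
  | [] => []
  | x :: xs => (x+1) :: xs

def incLast : List ℤ → List ℤ
  | [] => []
  | [x] => [x+1]
  | x :: y :: xs => x :: incLast (y :: xs)

def opA (L : List ℤ) : List ℤ := incFirst L ++ [2]

def opB (L : List ℤ) : List ℤ := 2 :: incLast L

lemma incLast_cons_cons (x y : ℤ) (xs : List ℤ) :
    incLast (x :: y :: xs) = x :: incLast (y :: xs) := rfl

lemma incLast_concat : ∀ (b : List ℤ) (u : ℤ), incLast (b ++ [u]) = b ++ [u+1] := by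
  intro b
  induction b with
  | nil => intro u; rfl
  | cons x xs ih =>
      intro u
      cases xs with
      | nil => rfl
      | cons y ys =>
          simp only [List.cons_append, incLast_cons_cons]
          rw [show y :: (ys ++ [u]) = (y :: ys) ++ [u] from rfl, ih]
          simp

lemma incLast_append : ∀ (xs : List ℤ) (y : ℤ) (ys : List ℤ),
    incLast (xs ++ y :: ys) = xs ++ incLast (y :: ys) := by
  intro xs
  induction xs with
  | nil => intros; rfl
  | cons x xs ih =>
      intro y ys
      cases xs with
      | nil => rfl
      | cons z zs =>
          simp only [List.cons_append, incLast_cons_cons]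
          rw [show z :: (zs ++ y :: ys) = (z :: zs) ++ y :: ys from rfl, ih]
          simp

lemma length_incLast : ∀ L : List ℤ, (incLast L).length = L.length := by
  intro L
  induction L with
  | nil => rfl
  | cons x xs ih =>
      cases xs with
      | nil => rfl
      | cons y ys => simp [incLast_cons_cons, ih]

lemma sum_incLast : ∀ L : List ℤ, L ≠ [] → (incLast L).sum = L.sum + 1 := by
  intro L
  induction L with
  | nil => intro h; exact absurd rfl h
  | cons x xs ih =>
      intro _
      cases xs with
      | nil => simp [incLast]
      | cons y ys =>
          rw [incLast_cons_cons, List.sum_cons, List.sum_cons, ih (by simp)]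
          ring

lemma entries_incLast : ∀ L : List ℤ, (∀ e ∈ L, 2 ≤ e) → ∀ e ∈ incLast L, 2 ≤ e := by
  intro L
  induction L with
  | nil => intro _ e he; simp [incLast] at he
  | cons x xs ih =>
      intro h e he
      cases xs with
      | nil =>
          simp [incLast] at he
          have := h x (by simp); omega
      | cons y ys =>
          rw [incLast_cons_cons] at he
          rcases List.mem_cons.mp he with h1 | h2
          · subst h1; exact h e (by simp)
          · exact ih (fun e he => h e (by simp [he])) e h2

lemma cm_incLast : ∀ L : List ℤ, L ≠ [] →
    cm (incLast L) = ⟨(cm L).a - (cm L).b, (cm L).b, (cm L).c - (cm L).d, (cm L).d⟩ := by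
  intro L
  induction L with
  | nil => intro h; exact absurd rfl h
  | cons x xs ih =>
      intro _
      cases xs with
      | nil =>
          show cm [x+1] = _
          simp only [cm_cons, cm_nil]
          ext <;> simp <;> ring
      | cons y ys =>
          rw [incLast_cons_cons, cm_cons, cm_cons, ih (by simp)]
          ext <;> simp only <;> ring

/-- the strengthened Wahl-chain invariant: full continuant matrix. -/
def WC' (n a : ℤ) (L : List ℤ) : Prop :=
  (∀ e ∈ L, 2 ≤ e) ∧ cm L = ⟨n^2, -(n*(n-a)-1), n*a-1, -(a*(n-a)-1)⟩

lemma wc_base : WC' 2 1 [4] := by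
  constructor
  · intro e he; simp at he; omega
  · show cm [4] = _
    simp only [cm_cons, cm_nil]
    ext <;> norm_num

lemma wc_opA {n a : ℤ} {L : List ℤ} (h : WC' n a L) (hne : L ≠ []) :
    WC' (n+a) a (opA L) := by
  obtain ⟨hent, hcm⟩ := h
  cases L with
  | nil => exact absurd rfl hne
  | cons x t =>
      constructor
      · intro e he
        simp only [opA, incFirst, List.mem_append, List.mem_cons] at he
        rcases he with (h1 | h2) | h3
        · have := hent x (by simp); omega
        · exact hent e (by simp [h2])
        · simp at h3; omega
      · have key : cm (opA (x :: t)) = M2.mul (cm ((x+1) :: t)) (cm [2]) := by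
          rw [opA]
          show cm ((x+1) :: t ++ [2]) = _
          rw [cm_append]
        rw [key]
        rw [cm_cons] at hcm ⊢
        have e1 : x * (cm t).a - (cm t).c = n^2 := congrArg M2.a hcm
        have e2 : x * (cm t).b - (cm t).d = -(n*(n-a)-1) := congrArg M2.b hcm
        have e3 : (cm t).a = n*a-1 := congrArg M2.c hcm
        have e4 : (cm t).b = -(a*(n-a)-1) := congrArg M2.d hcm
        show M2.mul ⟨(x+1) * (cm t).a - (cm t).c, (x+1) * (cm t).b - (cm t).d, (cm t).a, (cm t).b⟩ ⟨2,-1,1,0⟩ = _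
        simp only [M2.mul]
        ext
        · show ((x+1) * (cm t).a - (cm t).c) * 2 + ((x+1) * (cm t).b - (cm t).d) * 1 = (n+a)^2
          linear_combination 2*e1 + e2 + 2*e3 + e4
        · show ((x+1) * (cm t).a - (cm t).c) * (-1) + ((x+1) * (cm t).b - (cm t).d) * 0 = -((n+a)*((n+a)-a)-1)
          linear_combination -e1 - e3
        · show (cm t).a * 2 + (cm t).b * 1 = (n+a)*a-1
          linear_combination 2*e3 + e4
        · show (cm t).a * (-1) + (cm t).b * 0 = -(a*((n+a)-a)-1)
          linear_combination -e3

lemma wc_opB {n a : ℤ} {L : List ℤ} (h : WC' n a L) (hne : L ≠ []) :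
    WC' (2*n-a) n (opB L) := by
  obtain ⟨hent, hcm⟩ := h
  constructor
  · intro e he
    simp only [opB, List.mem_cons] at he
    rcases he with h1 | h2
    · omega
    · exact entries_incLast L hent e h2
  · rw [opB, cm_cons, cm_incLast L hne, hcm]
    ext
    · show 2 * ((⟨n^2, -(n*(n-a)-1), n*a-1, -(a*(n-a)-1)⟩ : M2).a - _) - _ = (2*n-a)^2
      simp only
      ring
    · simp only
      ring
    · simp only
      ring
    · simp only
      ring

end Aux8


namespace Aux8

inductive Pr : List ℤ → List ℤ → Prop
  | base : Pr [2] [2]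
  | t1 {b c} : Pr b c → Pr (b ++ [2]) (incLast c)
  | t2 {b c} : Pr b c → Pr (incLast b) (c ++ [2])

def Zf (b c : List ℤ) : List ℤ := b ++ 1 :: c.reverse

lemma incLast_ne_nil {L : List ℤ} (h : L ≠ []) : incLast L ≠ [] := by
  intro hc
  apply h
  have := length_incLast L
  rw [hc] at this
  exact List.length_eq_zero_iff.mp this.symm

lemma pr_ne {b c : List ℤ} (h : Pr b c) : b ≠ [] ∧ c ≠ [] := by
  induction h with
  | base => exact ⟨by simp, by simp⟩
  | t1 _ ih => exact ⟨by simp, incLast_ne_nil ih.2⟩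
  | t2 _ ih => exact ⟨incLast_ne_nil ih.1, by simp⟩

lemma pr_swap {b c : List ℤ} (h : Pr b c) : Pr c b := by
  induction h with
  | base => exact Pr.base
  | t1 _ ih => exact Pr.t2 ih
  | t2 _ ih => exact Pr.t1 ih

lemma incFirst_append (x : ℤ) (xs t : List ℤ) :
    incFirst ((x :: xs) ++ t) = incFirst (x :: xs) ++ t := rfl

lemma reverse_incLast : ∀ c : List ℤ, (incLast c).reverse = incFirst c.reverse := by
  intro c
  induction c with
  | nil => rfl
  | cons x xs ih =>
      cases xs with
      | nil => rfl
      | cons y ys =>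
          obtain ⟨z, zs, h⟩ : ∃ z zs, (y :: ys).reverse = z :: zs := by
            cases h : (y :: ys).reverse with
            | nil => exact absurd (List.reverse_eq_nil_iff.mp h) (by simp)
            | cons z zs => exact ⟨z, zs, rfl⟩
          calc (incLast (x :: y :: ys)).reverse
              = (incLast (y :: ys)).reverse ++ [x] := by
                rw [incLast_cons_cons, List.reverse_cons]
            _ = incFirst ((y :: ys).reverse) ++ [x] := by rw [ih]
            _ = incFirst ((y :: ys).reverse ++ [x]) := by rw [h, incFirst_append]
            _ = incFirst ((x :: y :: ys).reverse) := by rw [List.reverse_cons (a := x) (as := y :: ys)]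

lemma incLast_reverse (c : List ℤ) : incLast c.reverse = (incFirst c).reverse := by
  have := reverse_incLast c.reverse
  rw [List.reverse_reverse] at this
  calc incLast c.reverse = ((incLast c.reverse).reverse).reverse := by rw [List.reverse_reverse]
    _ = (incFirst c).reverse := by rw [this]

lemma zcf_Zf {b c : List ℤ} (h : Pr b c) : IsZCF (Zf b c) := by
  induction h with
  | base =>
      have step : BDStep [2,1,2] [1,1] := by
        have := BDStep.mid [] [] 2 2
        simpa using this
      exact Relation.ReflTransGen.single step
  | @t1 b c hp ih =>
      have hc : c ≠ [] := (pr_ne hp).2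
      cases hrev : c.reverse with
      | nil => exact absurd (List.reverse_eq_nil_iff.mp hrev) hc
      | cons v w =>
          have heq : Zf (b ++ [2]) (incLast c) = b ++ 2 :: 1 :: (v+1) :: w := by
            rw [Zf, reverse_incLast, hrev]
            simp [incFirst]
          have step : BDStep (b ++ 2 :: 1 :: (v+1) :: w) (Zf b c) := by
            have := BDStep.mid b w 2 (v+1)
            have h2 : Zf b c = b ++ (2-1) :: ((v+1)-1) :: w := by
              rw [Zf, hrev]; norm_num
            rw [h2]
            exact this
          rw [heq]
          exact Relation.ReflTransGen.head step ih
  | @t2 b c hp ih =>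
      have hb : b ≠ [] := (pr_ne hp).1
      rcases List.eq_nil_or_concat b with rfl | ⟨b0, u, rfl⟩
      · exact absurd rfl hb
      · simp only [List.concat_eq_append] at hp ih hb ⊢
        have heq : Zf (incLast (b0 ++ [u])) (c ++ [2]) = b0 ++ (u+1) :: 1 :: 2 :: c.reverse := by
          rw [Zf, incLast_concat]
          simp
        have step : BDStep (b0 ++ (u+1) :: 1 :: 2 :: c.reverse) (Zf (b0 ++ [u]) c) := by
          have := BDStep.mid b0 c.reverse (u+1) 2
          have h2 : Zf (b0 ++ [u]) c = b0 ++ ((u+1)-1) :: (2-1) :: c.reverse := by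
            rw [Zf]; norm_num
          rw [h2]
          exact this
        rw [heq]
        exact Relation.ReflTransGen.head step ih

lemma pr_alpha {b c : List ℤ} (h : Pr b c) : Pr (incFirst b) (2 :: c) := by
  induction h with
  | base =>
      have : Pr (incLast [2]) ([2] ++ [2]) := Pr.t2 Pr.base
      simpa [incLast, incFirst] using this
  | @t1 b c hp ih =>
      have hb : b ≠ [] := (pr_ne hp).1
      have hc : c ≠ [] := (pr_ne hp).2
      have h1 : incFirst (b ++ [2]) = incFirst b ++ [2] := by
        cases b with
        | nil => exact absurd rfl hb
        | cons x xs => rfl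
      have h2 : (2 : ℤ) :: incLast c = incLast (2 :: c) := by
        cases c with
        | nil => exact absurd rfl hc
        | cons y ys => rfl
      rw [h1, h2]
      exact Pr.t1 ih
  | @t2 b c hp ih =>
      have hb : b ≠ [] := (pr_ne hp).1
      have h1 : incFirst (incLast b) = incLast (incFirst b) := by
        cases b with
        | nil => exact absurd rfl hb
        | cons x xs =>
            cases xs with
            | nil => rfl
            | cons y ys => rfl
      rw [h1]
      exact Pr.t2 ih

def FamK (K : List ℤ) : Prop := K = [1,1] ∨ ∃ b c, Pr b c ∧ K = Zf b c

lemma famK_zcf {K : List ℤ} (h : FamK K) : IsZCF K := by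
  rcases h with rfl | ⟨b, c, hp, rfl⟩
  · exact Relation.ReflTransGen.refl
  · exact zcf_Zf hp

lemma famK_ne_nil {K : List ℤ} (h : FamK K) : K ≠ [] := by
  rcases h with rfl | ⟨b, c, hp, rfl⟩
  · simp
  · rw [Zf]
    rcases pr_ne hp with ⟨hb, _⟩
    simp [hb]

lemma opA_Zf {b c : List ℤ} (hb : b ≠ []) : opA (Zf b c) = Zf (incFirst b) (2 :: c) := by
  cases b with
  | nil => exact absurd rfl hb
  | cons x xs =>
      rw [opA, Zf, Zf]
      simp [incFirst]

lemma opB_Zf {b c : List ℤ} (hc : c ≠ []) : opB (Zf b c) = Zf (2 :: b) (incFirst c) := by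
  obtain ⟨v, w, hrc⟩ : ∃ v w, c.reverse = v :: w := by
    cases h : c.reverse with
    | nil => exact absurd (List.reverse_eq_nil_iff.mp h) hc
    | cons v w => exact ⟨v, w, rfl⟩
  show 2 :: incLast (b ++ 1 :: c.reverse) = (2 :: b) ++ 1 :: (incFirst c).reverse
  have h1 : incLast (1 :: c.reverse) = 1 :: incLast c.reverse := by
    rw [hrc]; rfl
  rw [incLast_append b 1 c.reverse, h1, incLast_reverse]
  simp

lemma famK_opA {K : List ℤ} (h : FamK K) : FamK (opA K) := by
  rcases h with rfl | ⟨b, c, hp, rfl⟩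
  · right
    exact ⟨[2], [2], Pr.base, by simp [opA, incFirst, Zf]⟩
  · right
    exact ⟨incFirst b, 2 :: c, pr_alpha hp, opA_Zf (pr_ne hp).1⟩

lemma famK_opB {K : List ℤ} (h : FamK K) : FamK (opB K) := by
  rcases h with rfl | ⟨b, c, hp, rfl⟩
  · right
    exact ⟨[2], [2], Pr.base, by simp [opB, incLast, Zf]⟩
  · right
    refine ⟨2 :: b, incFirst c, pr_swap (pr_alpha (pr_swap hp)), opB_Zf (pr_ne hp).2⟩

end Aux8

namespace Aux8

lemma length_incFirst (L : List ℤ) : (incFirst L).length = L.length := by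
  cases L <;> rfl

lemma sum_incFirst (L : List ℤ) (h : L ≠ []) : (incFirst L).sum = L.sum + 1 := by
  cases L with
  | nil => exact absurd rfl h
  | cons x xs => simp [incFirst]; ring

lemma f2_append {R : ℤ → ℤ → Prop} : ∀ {a b c d : List ℤ},
    List.Forall₂ R a b → List.Forall₂ R c d → List.Forall₂ R (a ++ c) (b ++ d) := by
  intro a b c d h1 h2
  induction h1 with
  | nil => simpa using h2
  | cons hab _ ih => exact List.Forall₂.cons hab ih

lemma f2_incLast : ∀ {K L : List ℤ}, List.Forall₂ (· ≤ ·) K L →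
    List.Forall₂ (· ≤ ·) (incLast K) (incLast L) := by
  intro K L h
  induction h with
  | nil => exact List.Forall₂.nil
  | @cons a b as bs hab h ih =>
      cases h with
      | nil => exact List.Forall₂.cons (by omega) List.Forall₂.nil
      | cons h2 h3 =>
          rw [incLast_cons_cons, incLast_cons_cons]
          exact List.Forall₂.cons hab ih

lemma f2_le_incFirst : ∀ {K L : List ℤ}, List.Forall₂ (· ≤ ·) K L →
    List.Forall₂ (· ≤ ·) K (incFirst L) := by
  intro K L h
  cases h with
  | nil => exact List.Forall₂.nil
  | cons hab h2 => exact List.Forall₂.cons (by omega) h2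

lemma f2_le_incLast : ∀ {K L : List ℤ}, List.Forall₂ (· ≤ ·) K L →
    List.Forall₂ (· ≤ ·) K (incLast L) := by
  intro K L h
  induction h with
  | nil => exact List.Forall₂.nil
  | @cons a b as bs hab h ih =>
      cases h with
      | nil => exact List.Forall₂.cons (by omega) List.Forall₂.nil
      | cons h2 h3 =>
          rw [incLast_cons_cons]
          exact List.Forall₂.cons hab ih

lemma f2_getD : ∀ {K L : List ℤ}, List.Forall₂ (· ≤ ·) K L →
    ∀ i : ℕ, K.getD i 0 ≤ L.getD i 0 := by
  intro K L h
  induction h with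
  | nil => intro i; simp
  | cons hab h2 ih =>
      intro i
      cases i with
      | zero => simpa using hab
      | succ j => simpa using ih j

def WitP (L K : List ℤ) : Prop :=
  List.Forall₂ (· ≤ ·) K L ∧ K.sum = L.sum - 5 ∧ FamK K

lemma sum_opA (L : List ℤ) (h : L ≠ []) : (opA L).sum = L.sum + 3 := by
  rw [opA, List.sum_append, sum_incFirst L h]; simp; ring

lemma sum_opB (L : List ℤ) (h : L ≠ []) : (opB L).sum = L.sum + 3 := by
  rw [opB, List.sum_cons, sum_incLast L h]; ring

lemma wit_opA {L K : List ℤ} (h : WitP L K) : WitP (opA L) (opA K) := by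
  obtain ⟨hf2, hsum, hfam⟩ := h
  have hKne : K ≠ [] := famK_ne_nil hfam
  have hLne : L ≠ [] := by
    intro hc; subst hc
    cases hf2; exact hKne rfl
  refine ⟨?_, ?_, famK_opA hfam⟩
  · cases hf2 with
    | nil => exact absurd rfl hKne
    | cons hab h2 =>
        exact List.Forall₂.cons (by omega)
          (f2_append h2 (List.Forall₂.cons le_rfl List.Forall₂.nil))
  · rw [sum_opA L hLne, sum_opA K hKne]; omega

lemma wit_opB {L K : List ℤ} (h : WitP L K) : WitP (opB L) (opB K) := by
  obtain ⟨hf2, hsum, hfam⟩ := h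
  have hKne : K ≠ [] := famK_ne_nil hfam
  have hLne : L ≠ [] := by
    intro hc; subst hc
    cases hf2; exact hKne rfl
  refine ⟨List.Forall₂.cons le_rfl (f2_incLast hf2), ?_, famK_opB hfam⟩
  rw [sum_opB L hLne, sum_opB K hKne]; omega

/-- the disjunctive structure statement carried through the induction -/
def CC (L : List ℤ) : Prop :=
  L = [4] ∨ L = [2,5] ∨ L = [5,2] ∨ ∃ L₀ K, (L = opA L₀ ∨ L = opB L₀) ∧ WitP L₀ K

lemma wit_of_CC {L : List ℤ} (h : CC L) (h4 : L ≠ [4]) : ∃ K, WitP L K := by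
  rcases h with rfl | rfl | rfl | ⟨L0, K, hop, hw⟩
  · exact absurd rfl h4
  · refine ⟨[1,1], ?_, by simp, Or.inl rfl⟩
    exact List.Forall₂.cons (by norm_num) (List.Forall₂.cons (by norm_num) List.Forall₂.nil)
  · refine ⟨[1,1], ?_, by simp, Or.inl rfl⟩
    exact List.Forall₂.cons (by norm_num) (List.Forall₂.cons (by norm_num) List.Forall₂.nil)
  · rcases hop with rfl | rfl
    · exact ⟨opA K, wit_opA hw⟩
    · exact ⟨opB K, wit_opB hw⟩

lemma exists_hj_aux : ∀ q : ℕ, ∀ m qq : ℤ, qq.toNat ≤ q → 0 < qq → qq < m → Int.gcd m qq = 1 →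
    ∃ L, L ≠ [] ∧ (∀ e ∈ L, 2 ≤ e) ∧ hjVal L = (m:ℚ)/(qq:ℚ) := by
  intro q
  induction q with
  | zero => intro m qq h h1 _ _; omega
  | succ N ih =>
      intro m qq hq h1 h2 h3
      by_cases hq1 : qq = 1
      · subst hq1
        refine ⟨[m], by simp, ?_, ?_⟩
        · intro e he; simp at he; omega
        · show hjVal [m] = _
          simp [hjVal]
      · have hq2 : 2 ≤ qq := by omega
        have hndvd : ¬ (qq ∣ m) := by
          intro hdvd
          have hd : qq ∣ (Int.gcd m qq : ℤ) := Int.dvd_coe_gcd hdvd dvd_rfl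
          rw [h3] at hd
          have := Int.le_of_dvd one_pos hd
          omega
        have hmodpos : 0 < m % qq := by
          rcases lt_or_eq_of_le (Int.emod_nonneg m (by omega : qq ≠ 0)) with h | h
          · exact h
          · exact absurd (Int.dvd_of_emod_eq_zero h.symm) hndvd
        have hmodlt : m % qq < qq := Int.emod_lt_of_pos m h1
        have hmod : m % qq = m - qq * (m / qq) := Int.emod_def m qq
        set e := m / qq + 1 with he
        set q' := e * qq - m with hq'
        have hq'1 : q' = qq - m % qq := by rw [hq', he, hmod]; ring
        have hq'pos : 0 < q' := by omega
        have hq'lt : q' < qq := by omega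
        have hco : IsCoprime m qq := Int.isCoprime_iff_gcd_eq_one.mpr h3
        have hco2 : IsCoprime qq q' := by
          have h' : IsCoprime qq (-m) := (hco.symm).neg_right
          have h'' := h'.add_mul_left_right e
          have hqe : q' = -m + qq * e := by rw [hq']; ring
          rw [hqe]; exact h''
        have hg' : Int.gcd qq q' = 1 := Int.isCoprime_iff_gcd_eq_one.mp hco2
        obtain ⟨L', hne', hent', hval'⟩ := ih qq q' (by omega) hq'pos hq'lt hg'
        have he2 : 2 ≤ e := by
          have h1' : 1 ≤ m / qq := by
            rw [Int.le_ediv_iff_mul_le h1]; omega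
          omega
        refine ⟨e :: L', by simp, ?_, ?_⟩
        · intro x hx
          rcases List.mem_cons.mp hx with rfl | hx'
          · exact he2
          · exact hent' x hx'
        · rw [hjVal_cons, hval']
          have hqq0 : (qq:ℚ) ≠ 0 := by exact_mod_cast (by omega : qq ≠ 0)
          have hq'0 : (q':ℚ) ≠ 0 := by exact_mod_cast hq'pos.ne'
          rw [inv_div]
          have hm : (m:ℚ) = (e:ℚ)*(qq:ℚ) - (q':ℚ) := by
            have : m = e * qq - q' := by rw [hq']; ring
            exact_mod_cast congrArg (Int.cast : ℤ → ℚ) this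
          rw [hm]
          field_simp
          try ring

end Aux8


namespace Aux8

lemma wc_val {n a : ℤ} {L : List ℤ} (h : WC' n a L) :
    hjVal L = ((n^2 : ℤ) : ℚ) / ((n*a - 1 : ℤ) : ℚ) := by
  have hs := cm_spec L h.1
  rw [hs.2.2, h.2]

lemma key : ∀ N : ℕ, ∀ n a : ℤ, ∀ L : List ℤ, n.toNat ≤ N → IsWahlChain n a L →
    WC' n a L ∧ CC L := by
  intro N
  induction N with
  | zero =>
      intro n a L hN hw
      obtain ⟨ha, han, -, -⟩ := hw
      omega
  | succ N ih =>
      intro n a L hN hw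
      obtain ⟨ha, han, hgcd, hent, hval⟩ := hw
      by_cases hn2 : n = 2
      · subst hn2
        have ha1 : a = 1 := by omega
        subst ha1
        have h4ent : ∀ e ∈ ([4] : List ℤ), 2 ≤ e := by intro e he; simp at he; omega
        have h4val : hjVal [4] = ((((2:ℤ))^2 : ℤ):ℚ)/(((2*1-1 : ℤ)):ℚ) := by
          show ((4:ℤ):ℚ) = _
          norm_num
        have hL : L = [4] := hjVal_unique L [4] hent h4ent (by rw [hval, h4val])
        exact ⟨by rw [hL]; exact wc_base, Or.inl hL⟩
      · have hn3 : 3 ≤ n := by omega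
        rcases lt_trichotomy (2*a) n with hlt | heq | hgt
        · -- case A : predecessor (n - a, a)
          have hn0a : a < n - a := by omega
          have hn02 : 2 ≤ n - a := by omega
          have hco : IsCoprime n a := Int.isCoprime_iff_gcd_eq_one.mpr hgcd
          have hco0 : IsCoprime (n - a) a := by
            have h' := hco.add_mul_left_left (-1)
            have hrw : n + a * (-1) = n - a := by ring
            rwa [hrw] at h'
          have hgcd0 : Int.gcd (n - a) a = 1 := Int.isCoprime_iff_gcd_eq_one.mp hco0
          have hq0 : 0 < (n-a)*a - 1 := by nlinarith
          have hqm : (n-a)*a - 1 < (n-a)^2 := by nlinarith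
          have hcop2 : IsCoprime (n-a) ((n-a)*a - 1) := ⟨a, -1, by ring⟩
          have hg2 : Int.gcd ((n-a)^2) ((n-a)*a-1) = 1 :=
            Int.isCoprime_iff_gcd_eq_one.mp hcop2.pow_left
          obtain ⟨L0, hL0ne, hL0ent, hL0val⟩ :=
            exists_hj_aux ((n-a)*a-1).toNat ((n-a)^2) ((n-a)*a-1) le_rfl hq0 hqm hg2
          have hw0 : IsWahlChain (n-a) a L0 := ⟨by omega, hn0a, hgcd0, hL0ent, hL0val⟩
          obtain ⟨hwc0, hcc0⟩ := ih (n-a) a L0 (by omega) hw0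
          have hwcop := wc_opA hwc0 hL0ne
          have hrw : n - a + a = n := by ring
          rw [hrw] at hwcop
          have hLeq : L = opA L0 := by
            apply hjVal_unique L (opA L0) hent hwcop.1
            rw [hval, wc_val hwcop]
          refine ⟨by rw [hLeq]; exact hwcop, ?_⟩
          by_cases h40 : L0 = [4]
          · subst h40
            right; right; left
            rw [hLeq]
            norm_num [opA, incFirst]
          · obtain ⟨K0, hK0⟩ := wit_of_CC hcc0 h40
            exact Or.inr (Or.inr (Or.inr ⟨L0, K0, Or.inl hLeq, hK0⟩))
        · exfalso
          have hdvd : a ∣ n := ⟨2, by omega⟩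
          have hd : a ∣ (Int.gcd n a : ℤ) := Int.dvd_coe_gcd hdvd dvd_rfl
          rw [hgcd] at hd
          have := Int.le_of_dvd one_pos hd
          omega
        · -- case B : predecessor (a, 2a - n)
          have ha2 : 2 ≤ a := by omega
          have h0a0 : 0 < 2*a - n := by omega
          have ha0n0 : 2*a - n < a := by omega
          have hco : IsCoprime n a := Int.isCoprime_iff_gcd_eq_one.mpr hgcd
          have hco0 : IsCoprime a (2*a - n) := by
            have h' : IsCoprime a (-n) := hco.symm.neg_right
            have h'' := h'.add_mul_left_right 2
            have hrw : -n + a * 2 = 2*a - n := by ring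
            rwa [hrw] at h''
          have hgcd0 : Int.gcd a (2*a-n) = 1 := Int.isCoprime_iff_gcd_eq_one.mp hco0
          have hq0 : 0 < a*(2*a-n) - 1 := by nlinarith
          have hqm : a*(2*a-n) - 1 < a^2 := by nlinarith
          have hcop2 : IsCoprime a (a*(2*a-n)-1) := ⟨2*a-n, -1, by ring⟩
          have hg2 : Int.gcd (a^2) (a*(2*a-n)-1) = 1 :=
            Int.isCoprime_iff_gcd_eq_one.mp hcop2.pow_left
          obtain ⟨L0, hL0ne, hL0ent, hL0val⟩ :=
            exists_hj_aux (a*(2*a-n)-1).toNat (a^2) (a*(2*a-n)-1) le_rfl hq0 hqm hg2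
          have hw0 : IsWahlChain a (2*a-n) L0 := ⟨h0a0, ha0n0, hgcd0, hL0ent, hL0val⟩
          obtain ⟨hwc0, hcc0⟩ := ih a (2*a-n) L0 (by omega) hw0
          have hwcop := wc_opB hwc0 hL0ne
          have hrw : 2*a - (2*a - n) = n := by ring
          rw [hrw] at hwcop
          have hLeq : L = opB L0 := by
            apply hjVal_unique L (opB L0) hent hwcop.1
            rw [hval, wc_val hwcop]
          refine ⟨by rw [hLeq]; exact hwcop, ?_⟩
          by_cases h40 : L0 = [4]
          · subst h40
            right; left
            rw [hLeq]
            norm_num [opB, incLast]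
          · obtain ⟨K0, hK0⟩ := wit_of_CC hcc0 h40
            exact Or.inr (Or.inr (Or.inr ⟨L0, K0, Or.inr hLeq, hK0⟩))

end Aux8

/-- Every Wahl chain other than `[4]` and `[2,5]` (taken up to orientation,
so also `[5,2]`) admits a marking making it del Pezzo of type (I) and degree 4
(weight 5), with central mark the last or the first entry. -/
theorem stmt8 (n a : ℤ) (L : List ℤ) (h : IsWahlChain n a L)
    (h4 : L ≠ [4]) (h25 : L ≠ [2, 5]) (h52 : L ≠ [5, 2]) :
    AdmitsZCF L.dropLast 5 ∨ AdmitsZCF L.tail 5 := by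
  obtain ⟨-, hC⟩ := Aux8.key n.toNat n a L le_rfl h
  rcases hC with h' | h' | h' | ⟨L0, K, hop, hwit⟩
  · exact absurd h' h4
  · exact absurd h' h25
  · exact absurd h' h52
  obtain ⟨hf2, hsum, hfam⟩ := hwit
  have hKne : K ≠ [] := Aux8.famK_ne_nil hfam
  have hL0ne : L0 ≠ [] := by
    intro hc; subst hc; cases hf2; exact hKne rfl
  have hlen : K.length = L0.length := hf2.length_eq
  rcases hop with hA | hB
  · left
    have hdl : L.dropLast = Aux8.incFirst L0 := by
      rw [hA, Aux8.opA]
      exact List.dropLast_concat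
    refine ⟨K, ?_, ?_, ?_, Aux8.famK_zcf hfam⟩
    · rw [hdl, Aux8.length_incFirst]; exact hlen
    · intro i; rw [hdl]; exact Aux8.f2_getD (Aux8.f2_le_incFirst hf2) i
    · rw [hdl, Aux8.sum_incFirst L0 hL0ne]; omega
  · right
    have hdl : L.tail = Aux8.incLast L0 := by rw [hB, Aux8.opB]; rfl
    refine ⟨K, ?_, ?_, ?_, Aux8.famK_zcf hfam⟩
    · rw [hdl, Aux8.length_incLast]; exact hlen
    · intro i; rw [hdl]; exact Aux8.f2_getD (Aux8.f2_le_incLast hf2) i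
    · rw [hdl, Aux8.sum_incLast L0 hL0ne]; omega

end Stmt8Proof
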